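/- Define x ≼' y on ℕ^ℕ iff rank(x) < rank(y), or rank(x) = rank(y) and x ≤_lex y in the lexicographic order on ℕ^ℕ. Then ≼' is a linear order (total, antisymmetric, transitive) on ℕ^ℕ of uncountable cofinality. -/

import Mathlib

open Cardinal Ordinal

/-- The set `Q_x = {q_k : x(k) = 0}` of rationals coded by `x ∈ ℕ^ℕ`,
relative to a fixed enumeration `q` of `ℚ`. -/
def Qset (q : ℕ → ℚ) (x : ℕ → ℕ) : Set ℚ := {r | ∃ k, x k = 0 ∧ q k = r}

/-- The maximal well-ordered initial segment of `Q_x`: the set of `r ∈ Q_x` whose set of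
`≤`-predecessors within `Q_x` is well-founded under `<`. -/
def maxWO (q : ℕ → ℚ) (x : ℕ → ℕ) : Set ℚ :=
  {r ∈ Qset q x | ({r' ∈ Qset q x | r' ≤ r}).WellFoundedOn (· < ·)}

/-- The lexicographic order on Baire space `ℕ^ℕ`. -/
def lexLE (x y : ℕ → ℕ) : Prop :=
  x = y ∨ ∃ n, (∀ m, m < n → x m = y m) ∧ x n < y n

lemma lexLE_total (x y : ℕ → ℕ) : lexLE x y ∨ lexLE y x := by
  classical
  by_cases hxy : x = y
  · exact Or.inl (Or.inl hxy)
  have hex : ∃ n, x n ≠ y n := by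
    by_contra h
    push_neg at h
    exact hxy (funext h)
  set n := Nat.find hex with hn
  have hne : x n ≠ y n := Nat.find_spec hex
  have hagree : ∀ m, m < n → x m = y m := fun m hm => by
    have := Nat.find_min hex hm
    simpa using this
  rcases lt_or_gt_of_ne hne with h | h
  · exact Or.inl (Or.inr ⟨n, hagree, h⟩)
  · exact Or.inr (Or.inr ⟨n, fun m hm => (hagree m hm).symm, h⟩)

lemma lexLE_antisymm {x y : ℕ → ℕ} (h1 : lexLE x y) (h2 : lexLE y x) : x = y := by
  rcases h1 with rfl | ⟨n, hag, hlt⟩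
  · rfl
  rcases h2 with rfl | ⟨n', hag', hlt'⟩
  · rfl
  exfalso
  rcases lt_trichotomy n n' with h | rfl | h
  · rw [hag' n h] at hlt; exact lt_irrefl _ hlt
  · exact lt_irrefl _ (hlt.trans hlt')
  · rw [hag n' h] at hlt'; exact lt_irrefl _ hlt'

lemma lexLE_trans {x y z : ℕ → ℕ} (h1 : lexLE x y) (h2 : lexLE y z) : lexLE x z := by
  rcases h1 with rfl | ⟨n, hag, hlt⟩
  · exact h2
  rcases h2 with rfl | ⟨n', hag', hlt'⟩
  · exact Or.inr ⟨n, hag, hlt⟩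
  rcases lt_trichotomy n n' with h | rfl | h
  · refine Or.inr ⟨n, fun m hm => (hag m hm).trans (hag' m (hm.trans h)), ?_⟩
    rw [← hag' n h]; exact hlt
  · exact Or.inr ⟨n, fun m hm => (hag m hm).trans (hag' m hm), hlt.trans hlt'⟩
  · refine Or.inr ⟨n', fun m hm => (hag m (hm.trans h)).trans (hag' m hm), ?_⟩
    rw [hag n' h]; exact hlt'

/-- Every ordinal in the range of `rank` is countable. -/
lemma rank_card_le_aleph0 {q : ℕ → ℚ} (rank : (ℕ → ℕ) → Ordinal)
    (hrank : ∀ x, Nonempty ((rank x).ToType ≃o ↥(maxWO q x))) (x : ℕ → ℕ) :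
    (rank x).card ≤ ℵ₀ := by
  obtain ⟨e⟩ := hrank x
  have : Countable (rank x).ToType := Countable.of_equiv _ e.toEquiv.symm
  rw [← Cardinal.mk_toType]
  exact Cardinal.mk_le_aleph0

/-- For every countable ordinal `β` there is an `x` with `β < rank x`. -/
lemma exists_rank_gt {q : ℕ → ℚ} (hq : Function.Bijective q)
    (rank : (ℕ → ℕ) → Ordinal)
    (hrank : ∀ x, Nonempty ((rank x).ToType ≃o ↥(maxWO q x)))
    (β : Ordinal) (hβ : β.card ≤ ℵ₀) : ∃ x, β < rank x := by
  classical
  set α := Order.succ β with hα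
  have hαc : α.card ≤ ℵ₀ := by
    rw [hα, Ordinal.card_succ]
    exact Cardinal.add_le_aleph0.2 ⟨hβ, Cardinal.one_le_aleph0⟩
  have hcnt : Countable α.ToType := by
    rw [← Cardinal.mk_le_aleph0_iff, Cardinal.mk_toType]
    exact hαc
  obtain ⟨f⟩ : Nonempty (α.ToType ↪o ℚ) := Order.embedding_from_countable_to_dense _ _
  set S : Set ℚ := Set.range f with hS
  have hSwf : S.WellFoundedOn (· < ·) := by
    rw [hS, Set.wellFoundedOn_range]
    have : (Function.onFun (· < ·) f) = ((· < ·) : α.ToType → α.ToType → Prop) := by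
      funext a b
      exact propext f.lt_iff_lt
    rw [this]
    exact wellFounded_lt
  set x : ℕ → ℕ := fun k => if q k ∈ S then 0 else 1 with hx
  have hQ : Qset q x = S := by
    ext r
    constructor
    · rintro ⟨k, hk, rfl⟩
      by_contra h
      simp [hx, h] at hk
    · intro hr
      obtain ⟨k, rfl⟩ := hq.2 r
      exact ⟨k, by simp [hx, hr], rfl⟩
  have hmax : maxWO q x = S := by
    ext r
    simp only [maxWO, hQ, Set.mem_setOf_eq, Set.sep_setOf]
    exact ⟨fun h => h.1, fun h =>
      ⟨h, hSwf.subset fun r' hr' => hr'.1⟩⟩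
  obtain ⟨e⟩ := hrank x
  rw [hmax] at e
  have g : α.ToType ≃o ↥S := StrictMono.orderIso _ f.strictMono
  have hiso : (rank x).ToType ≃o α.ToType := e.trans g.symm
  have hrx : rank x = α := by
    rw [← Ordinal.type_toType (rank x), ← Ordinal.type_toType α]
    exact Quotient.sound ⟨hiso.toRelIsoLT⟩
  exact ⟨x, hrx ▸ Order.lt_succ β⟩

/-- The relation `x ≼' y` iff `rank x < rank y`, or `rank x = rank y` and `x ≤lex y`,
is a linear order on `ℕ^ℕ` of uncountable cofinality. -/
theorem rank_lex_linear_order_uncountably_cofinal (q : ℕ → ℚ) (hq : Function.Bijective q)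
    (rank : (ℕ → ℕ) → Ordinal)
    (hrank : ∀ x, Nonempty ((rank x).ToType ≃o ↥(maxWO q x)))
    (prec' : (ℕ → ℕ) → (ℕ → ℕ) → Prop)
    (hdef : ∀ x y, prec' x y ↔ (rank x < rank y ∨ (rank x = rank y ∧ lexLE x y))) :
    (∀ x y, prec' x y ∨ prec' y x) ∧
    (∀ x y, prec' x y → prec' y x → x = y) ∧
    (∀ x y z, prec' x y → prec' y z → prec' x z) ∧
    ¬ ∃ Y : Set (ℕ → ℕ), Y.Countable ∧ ∀ x : ℕ → ℕ, ∃ y ∈ Y, prec' x y := by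
  refine ⟨?_, ?_, ?_, ?_⟩
  · -- totality
    intro x y
    rcases lt_trichotomy (rank x) (rank y) with h | h | h
    · exact Or.inl ((hdef x y).2 (Or.inl h))
    · rcases lexLE_total x y with hl | hl
      · exact Or.inl ((hdef x y).2 (Or.inr ⟨h, hl⟩))
      · exact Or.inr ((hdef y x).2 (Or.inr ⟨h.symm, hl⟩))
    · exact Or.inr ((hdef y x).2 (Or.inl h))
  · -- antisymmetry
    intro x y hxy hyx
    rw [hdef] at hxy hyx
    rcases hxy with h | ⟨he, hl⟩
    · rcases hyx with h' | ⟨he', _⟩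
      · exact absurd (h.trans h') (lt_irrefl _)
      · exact absurd h (he' ▸ lt_irrefl _)
    · rcases hyx with h' | ⟨_, hl'⟩
      · exact absurd h' (he ▸ lt_irrefl _)
      · exact lexLE_antisymm hl hl'
  · -- transitivity
    intro x y z hxy hyz
    rw [hdef] at hxy hyz ⊢
    rcases hxy with h | ⟨he, hl⟩
    · rcases hyz with h' | ⟨he', _⟩
      · exact Or.inl (h.trans h')
      · exact Or.inl (he' ▸ h)
    · rcases hyz with h' | ⟨he', hl'⟩
      · exact Or.inl (he ▸ h')
      · exact Or.inr ⟨he.trans he', lexLE_trans hl hl'⟩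
  · -- uncountable cofinality
    rintro ⟨Y, hYc, hcof⟩
    rcases Y.eq_empty_or_nonempty with rfl | hne
    · obtain ⟨y, hy, -⟩ := hcof fun _ => 0
      exact hy
    obtain ⟨g, rfl⟩ := hYc.exists_eq_range hne
    set β : Ordinal := Ordinal.lsub fun n : ℕ => rank (g n) with hβ
    have hβcard : β.card ≤ ℵ₀ := by
      have hβlt : β < (ℵ₁ : Cardinal).ord := by
        apply Ordinal.lsub_lt_ord_lift
        · rw [Cardinal.isRegular_aleph_one.cof_eq]
          simpa using Cardinal.aleph0_lt_aleph_one
        · intro i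
          rw [Cardinal.lt_ord]
          exact lt_of_le_of_lt (rank_card_le_aleph0 rank hrank _)
            Cardinal.aleph0_lt_aleph_one
      rw [Cardinal.lt_ord, ← Cardinal.succ_aleph0, Order.lt_succ_iff] at hβlt
      exact hβlt
    obtain ⟨x, hx⟩ := exists_rank_gt hq rank hrank β hβcard
    obtain ⟨y, hy, hxy⟩ := hcof x
    obtain ⟨n, rfl⟩ := hy
    have hyβ : rank (g n) < β := Ordinal.lt_lsub _ n
    rw [hdef] at hxy
    rcases hxy with h | ⟨he, -⟩
    · exact absurd ((h.trans hyβ).trans hx) (lt_irrefl _)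
    · exact absurd ((he ▸ hyβ).trans hx) (lt_irrefl _)
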